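/- Let z be a power of 2 and let k be a positive multiple of z, and set d = 2kz + k/z. There exists a set {x_1,...,x_{zk}} ⊆ {0,1}^d such that for every y ∈ {±1}^{zk} there exists w ∈ ℝ_+^d with ‖w‖₁ ≤ k such that for all i ∈ [zk], y[i]·(⟨w, x_i⟩ − z/2) = 1/2. -/

import Mathlib

set_option linter.unnecessarySeqFocus false
set_option linter.unusedTactic false


open Finset

noncomputable def walsh (n : ℕ) (a b : Fin n → Bool) : ℝ :=
  ∏ i, (if a i && b i then (-1 : ℝ) else 1)

lemma walsh_pm (n : ℕ) (a b : Fin n → Bool) : walsh n a b = 1 ∨ walsh n a b = -1 := by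
  unfold walsh
  refine Finset.prod_induction _ (fun r => r = 1 ∨ r = -1) ?_ (Or.inl rfl) ?_
  · rintro x y (rfl | rfl) (rfl | rfl) <;> norm_num
  · intro i _
    by_cases h : a i && b i <;> simp [h]

lemma walsh_orth (n : ℕ) (a a' : Fin n → Bool) :
    ∑ b : Fin n → Bool, walsh n a b * walsh n a' b = if a = a' then (2 : ℝ) ^ n else 0 := by
  have h1 : ∀ b : Fin n → Bool, walsh n a b * walsh n a' b =
      ∏ i, ((if a i && b i then (-1 : ℝ) else 1) * (if a' i && b i then (-1 : ℝ) else 1)) := by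
    intro b; rw [walsh, walsh, ← Finset.prod_mul_distrib]
  simp_rw [h1]
  have h2 : ∑ b : Fin n → Bool, ∏ i,
        ((if a i && b i then (-1 : ℝ) else 1) * (if a' i && b i then (-1 : ℝ) else 1))
      = ∏ i, ∑ r : Bool, ((if a i && r then (-1 : ℝ) else 1) * (if a' i && r then (-1 : ℝ) else 1)) := by
    rw [Finset.prod_univ_sum, Fintype.piFinset_univ]
  rw [h2]
  have h3 : ∀ i, (∑ r : Bool, ((if a i && r then (-1 : ℝ) else 1) * (if a' i && r then (-1 : ℝ) else 1)))
      = if a i = a' i then 2 else 0 := by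
    intro i
    cases ha : a i <;> cases ha' : a' i <;> simp [ha, ha'] <;> norm_num
  simp_rw [h3]
  by_cases h : a = a'
  · subst h; simp [Finset.prod_const]
  · rw [if_neg h]
    obtain ⟨i, hi⟩ : ∃ i, a i ≠ a' i := by
      by_contra hc; push_neg at hc; exact h (funext hc)
    exact Finset.prod_eq_zero (Finset.mem_univ i) (by simp [hi])

lemma blockLemma (j : ℕ) :
    ∃ x : Fin (2^j * 2^j) → Fin (2^j * 2^j + (2^j * 2^j + 1)) → ℝ,
      (∀ i l, x i l = 0 ∨ x i l = 1) ∧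
      ∀ y : Fin (2^j * 2^j) → ℝ, (∀ i, y i = 1 ∨ y i = -1) →
        ∃ w : Fin (2^j * 2^j + (2^j * 2^j + 1)) → ℝ, (∀ l, 0 ≤ w l) ∧
          (∑ l, |w l|) ≤ (2:ℝ)^j ∧
          ∀ i, (∑ l, w l * x i l) = ((2:ℝ)^j + y i) / 2 := by
  set N := 2^j * 2^j with hN
  have hcard : Fintype.card (Fin (2*j) → Bool) = N := by
    rw [Fintype.card_fun, Fintype.card_bool, Fintype.card_fin, hN, two_mul, pow_add]
  set e := Fintype.equivFinOfCardEq hcard with he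
  set A : Fin N → Fin N → ℝ := fun a l => walsh (2*j) (e.symm a) (e.symm l) with hA
  have hApm : ∀ (a l : Fin N), A a l = 1 ∨ A a l = -1 := fun a l => walsh_pm _ _ _
  have hAorth : ∀ a a' : Fin N, ∑ l, A a l * A a' l
      = if a = a' then (2:ℝ)^j * (2:ℝ)^j else 0 := by
    intro a a'
    have hc : ∑ l : Fin N, A a l * A a' l
        = ∑ b : Fin (2*j) → Bool, walsh (2*j) (e.symm a) b * walsh (2*j) (e.symm a') b :=
      (Equiv.sum_comp e.symm (fun b => walsh (2*j) (e.symm a) b * walsh (2*j) (e.symm a') b))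
    rw [hc, walsh_orth]
    have hiff : (e.symm a = e.symm a') ↔ a = a' := e.symm.apply_eq_iff_eq
    rw [if_congr hiff rfl rfl, two_mul, pow_add]
  have hNRpos : (0:ℝ) < (2:ℝ)^j * (2:ℝ)^j := by positivity
  refine ⟨fun a => Fin.addCases (fun l => (1 + A a l)/2)
      (Fin.addCases (fun l : Fin N => (1 - A a l)/2) (fun _ : Fin 1 => (1:ℝ))), ?_, ?_⟩
  · -- binary
    intro i l
    refine Fin.addCases ?_ ?_ l
    · intro l'
      simp only [Fin.addCases_left]
      rcases hApm i l' with h | h <;> rw [h] <;> norm_num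
    · intro l'
      simp only [Fin.addCases_right]
      refine Fin.addCases ?_ ?_ l'
      · intro l''
        simp only [Fin.addCases_left]
        rcases hApm i l'' with h | h <;> rw [h] <;> norm_num
      · intro l''
        right
        simp
  · intro y hy
    set u : Fin N → ℝ := fun l => ∑ a, y a * A a l with hu
    have huA : ∀ a : Fin N, ∑ l, u l * A a l = ((2:ℝ)^j * (2:ℝ)^j) * y a := by
      intro a
      have h1 : ∀ l, u l * A a l = ∑ a', y a' * (A a' l * A a l) := by
        intro l
        rw [hu]
        rw [Finset.sum_mul]
        exact Finset.sum_congr rfl (fun a' _ => by ring)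
      simp_rw [h1]
      rw [Finset.sum_comm]
      have h2 : ∀ a' : Fin N, ∑ l, y a' * (A a' l * A a l)
          = y a' * (if a' = a then (2:ℝ)^j * (2:ℝ)^j else 0) := by
        intro a'
        rw [← Finset.mul_sum, hAorth]
      simp_rw [h2]
      simp [Finset.sum_ite_eq', mul_comm]
    have hyy : ∀ i, y i * y i = 1 := by
      intro i; rcases hy i with h | h <;> rw [h] <;> norm_num
    have huu : ∑ l, u l * u l = ((2:ℝ)^j * (2:ℝ)^j) * ((2:ℝ)^j * (2:ℝ)^j) := by
      have h1 : ∀ l, u l * u l = ∑ a, y a * (A a l * u l) := by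
        intro l
        conv_lhs => rw [hu]
        rw [Finset.sum_mul]
        exact Finset.sum_congr rfl (fun a _ => by ring)
      simp_rw [h1]
      rw [Finset.sum_comm]
      have h2 : ∀ a : Fin N, ∑ l, y a * (A a l * u l) = y a * (((2:ℝ)^j * (2:ℝ)^j) * y a) := by
        intro a
        rw [← Finset.mul_sum]
        congr 1
        rw [← huA a]
        exact Finset.sum_congr rfl (fun l _ => by ring)
      simp_rw [h2]
      have h3 : ∀ a : Fin N, y a * (((2:ℝ)^j * (2:ℝ)^j) * y a) = ((2:ℝ)^j * (2:ℝ)^j) := by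
        intro a
        have := hyy a
        nlinarith [hyy a]
      simp_rw [h3]
      rw [Finset.sum_const, Finset.card_univ, Fintype.card_fin]
      rw [hN]
      push_cast
      ring
    set v : Fin N → ℝ := fun l => u l / ((2:ℝ)^j * (2:ℝ)^j) with hv
    have hvA : ∀ a : Fin N, ∑ l, v l * A a l = y a := by
      intro a
      have h1 : ∀ l, v l * A a l = (u l * A a l) / ((2:ℝ)^j * (2:ℝ)^j) := by
        intro l; rw [hv]; ring
      simp_rw [h1]
      rw [← Finset.sum_div, huA]
      field_simp
    have hvv : ∑ l, v l ^ 2 = 1 := by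
      have h1 : ∀ l, v l ^ 2 = (u l * u l) / (((2:ℝ)^j * (2:ℝ)^j) * ((2:ℝ)^j * (2:ℝ)^j)) := by
        intro l; rw [hv]; ring
      simp_rw [h1]
      rw [← Finset.sum_div, huu]
      field_simp
    set S : ℝ := ∑ l, |v l| with hS
    have hSnn : 0 ≤ S := Finset.sum_nonneg (fun l _ => abs_nonneg _)
    have hSsq : S ^ 2 ≤ ((2:ℝ)^j)^2 := by
      have hcs := Finset.sum_mul_sq_le_sq_mul_sq Finset.univ (fun l : Fin N => |v l|) (fun _ => (1:ℝ))
      simp only [mul_one, one_pow] at hcs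
      have h2 : ∑ l : Fin N, |v l| ^ 2 = 1 := by
        have : ∀ l : Fin N, |v l| ^ 2 = v l ^ 2 := fun l => sq_abs _
        simp_rw [this]; exact hvv
      rw [h2, one_mul] at hcs
      have h3 : (∑ _l : Fin N, (1:ℝ)) = ((2:ℝ)^j)^2 := by
        rw [Finset.sum_const, Finset.card_univ, Fintype.card_fin, hN]
        push_cast; ring
      rw [h3] at hcs
      exact hcs
    have hSle : S ≤ (2:ℝ)^j := by nlinarith [pow_pos (by norm_num : (0:ℝ) < 2) j]
    have hcnn : (0:ℝ) ≤ ((2:ℝ)^j - S)/2 := by linarith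
    refine ⟨Fin.addCases (fun l => max (v l) 0)
        (Fin.addCases (fun l : Fin N => max (-(v l)) 0) (fun _ : Fin 1 => ((2:ℝ)^j - S)/2)),
        ?_, ?_, ?_⟩
    · intro l
      refine Fin.addCases ?_ ?_ l
      · intro l'; simp only [Fin.addCases_left]; exact le_max_right _ _
      · intro l'
        simp only [Fin.addCases_right]
        refine Fin.addCases ?_ ?_ l'
        · intro l''; simp only [Fin.addCases_left]; exact le_max_right _ _
        · intro l''; simp only [Fin.addCases_right]; exact hcnn
    · rw [Fin.sum_univ_add]
      simp only [Fin.addCases_left, Fin.addCases_right]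
      rw [Fin.sum_univ_add]
      simp only [Fin.addCases_left, Fin.addCases_right]
      have e1 : ∀ l : Fin N, |max (v l) 0| = max (v l) 0 := fun l =>
        abs_of_nonneg (le_max_right _ _)
      have e2 : ∀ l : Fin N, |max (-(v l)) 0| = max (-(v l)) 0 := fun l =>
        abs_of_nonneg (le_max_right _ _)
      simp_rw [e1, e2]
      have e3 : ∑ l : Fin N, max (v l) 0 + ∑ l : Fin N, max (-(v l)) 0 = S := by
        rw [← Finset.sum_add_distrib, hS]
        exact Finset.sum_congr rfl (fun l _ => max_zero_add_max_neg_zero_eq_abs_self _)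
      have e4 : ∑ _l : Fin 1, |((2:ℝ)^j - S)/2| = ((2:ℝ)^j - S)/2 := by
        rw [Fin.sum_univ_one, abs_of_nonneg hcnn]
      rw [e4]
      linarith [e3]
    · intro a
      rw [Fin.sum_univ_add]
      simp only [Fin.addCases_left, Fin.addCases_right]
      rw [Fin.sum_univ_add]
      simp only [Fin.addCases_left, Fin.addCases_right]
      rw [Fin.sum_univ_one]
      have key : ∀ l : Fin N, max (v l) 0 * ((1 + A a l)/2) + max (-(v l)) 0 * ((1 - A a l)/2)
          = (|v l| + v l * A a l)/2 := by
        intro l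
        rcases le_total 0 (v l) with h | h
        · rw [max_eq_left h, max_eq_right (by linarith : -(v l) ≤ 0), abs_of_nonneg h]; ring
        · rw [max_eq_right h, max_eq_left (by linarith : 0 ≤ -(v l)), abs_of_nonpos h]; ring
      have comb : ∑ l : Fin N, max (v l) 0 * ((1 + A a l)/2)
            + ∑ l : Fin N, max (-(v l)) 0 * ((1 - A a l)/2)
          = ∑ l : Fin N, (|v l| + v l * A a l)/2 := by
        rw [← Finset.sum_add_distrib]
        exact Finset.sum_congr rfl (fun l _ => key l)
      have expand : ∑ l : Fin N, (|v l| + v l * A a l)/2 = S/2 + (y a)/2 := by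
        rw [← Finset.sum_div, Finset.sum_add_distrib, ← hS, hvA a]
        ring
      linarith [comb, expand]


lemma enc_div {B m : ℕ} (hm : 0 < m) (β : Fin B) (s : Fin m) :
    ((finProdFinEquiv (β, s) : Fin (B*m)) : ℕ) / m = β := by
  rw [finProdFinEquiv_apply_val, mul_comm m (β : ℕ), Nat.add_mul_div_right _ _ hm,
    Nat.div_eq_of_lt s.isLt, zero_add]

lemma enc_mod {B m : ℕ} (β : Fin B) (s : Fin m) :
    ((finProdFinEquiv (β, s) : Fin (B*m)) : ℕ) % m = s := by
  rw [finProdFinEquiv_apply_val, Nat.add_mul_mod_self_left, Nat.mod_eq_of_lt s.isLt]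

lemma assembleLemma (B N m : ℕ) (hNpos : 0 < N) (hmpos : 0 < m) (Z : ℝ)
    (xb : Fin N → Fin m → ℝ)
    (hxb : ∀ i l, xb i l = 0 ∨ xb i l = 1)
    (hblock : ∀ yb : Fin N → ℝ, (∀ i, yb i = 1 ∨ yb i = -1) →
      ∃ wb : Fin m → ℝ, (∀ l, 0 ≤ wb l) ∧ (∑ l, |wb l|) ≤ Z ∧
        ∀ i, (∑ l, wb l * xb i l) = (Z + yb i) / 2) :
    ∃ x : Fin (B * N) → Fin (B * m) → ℝ,
      (∀ i l, x i l = 0 ∨ x i l = 1) ∧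
      ∀ y : Fin (B * N) → ℝ, (∀ i, y i = 1 ∨ y i = -1) →
        ∃ w : Fin (B * m) → ℝ, (∀ l, 0 ≤ w l) ∧
          (∑ l, |w l|) ≤ (B : ℝ) * Z ∧
          ∀ i, (∑ l, w l * x i l) = (Z + y i) / 2 := by
  have hidy : ∀ i : Fin (B * N), (i : ℕ) / N < B := by
    intro i; rw [Nat.div_lt_iff_lt_mul hNpos]; exact i.isLt
  have hidl : ∀ l : Fin (B * m), (l : ℕ) / m < B := by
    intro l; rw [Nat.div_lt_iff_lt_mul hmpos]; exact l.isLt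
  set x : Fin (B * N) → Fin (B * m) → ℝ := fun i l =>
    if (l : ℕ) / m = (i : ℕ) / N then
      xb ⟨(i:ℕ) % N, Nat.mod_lt _ hNpos⟩ ⟨(l:ℕ) % m, Nat.mod_lt _ hmpos⟩ else 0 with hx
  refine ⟨x, ?_, ?_⟩
  · intro i l
    simp only [hx]
    by_cases h : (l : ℕ) / m = (i : ℕ) / N
    · simp only [if_pos h]; exact hxb _ _
    · simp [if_neg h]
  · intro y hy
    have hemb : ∀ (β : Fin B) (a : Fin N), (a : ℕ) + N * β < B * N := by
      intro β a
      calc (a:ℕ) + N * β < N + N * β := by omega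
        _ = N * (β + 1) := by ring
        _ ≤ N * B := Nat.mul_le_mul_left _ β.isLt
        _ = B * N := Nat.mul_comm _ _
    set yb : Fin B → Fin N → ℝ := fun β a => y ⟨a + N * β, hemb β a⟩ with hyb
    have hyb_sign : ∀ β a, yb β a = 1 ∨ yb β a = -1 := fun β a => hy _
    choose wb hwb0 hwb1 hwb2 using fun β : Fin B => hblock (yb β) (hyb_sign β)
    set w : Fin (B * m) → ℝ := fun l =>
      wb ⟨(l:ℕ)/m, hidl l⟩ ⟨(l:ℕ)%m, Nat.mod_lt _ hmpos⟩ with hw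
    have hwenc : ∀ (β : Fin B) (s : Fin m), w (finProdFinEquiv (β, s)) = wb β s := by
      intro β s
      have e1 : (⟨((finProdFinEquiv (β, s) : Fin (B*m)) : ℕ)/m,
          hidl (finProdFinEquiv (β, s))⟩ : Fin B) = β := Fin.ext (enc_div hmpos β s)
      have e2 : (⟨((finProdFinEquiv (β, s) : Fin (B*m)) : ℕ)%m,
          Nat.mod_lt _ hmpos⟩ : Fin m) = s := Fin.ext (enc_mod β s)
      simp only [hw]
      rw [e1, e2]
    refine ⟨w, fun l => by simp only [hw]; exact hwb0 _ _, ?_, ?_⟩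
    · rw [← Equiv.sum_comp (finProdFinEquiv : Fin B × Fin m ≃ Fin (B * m)) (fun l => |w l|),
        Fintype.sum_prod_type]
      have hble : ∀ (β : Fin B), ∑ s : Fin m, |w (finProdFinEquiv (β, s))| ≤ Z := by
        intro β
        calc ∑ s : Fin m, |w (finProdFinEquiv (β, s))| = ∑ s : Fin m, |wb β s| :=
              Finset.sum_congr rfl (fun s _ => by rw [hwenc])
          _ ≤ Z := hwb1 β
      calc ∑ β : Fin B, ∑ s : Fin m, |w (finProdFinEquiv (β, s))|
          ≤ ∑ _β : Fin B, Z := Finset.sum_le_sum (fun β _ => hble β)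
        _ = (B : ℝ) * Z := by
            rw [Finset.sum_const, Finset.card_univ, Fintype.card_fin, nsmul_eq_mul]
    · intro i
      rw [← Equiv.sum_comp (finProdFinEquiv : Fin B × Fin m ≃ Fin (B * m))
          (fun l => w l * x i l), Fintype.sum_prod_type]
      have hterm : ∀ (β : Fin B) (s : Fin m),
          w (finProdFinEquiv (β, s)) * x i (finProdFinEquiv (β, s))
          = if β = (⟨(i:ℕ)/N, hidy i⟩ : Fin B) then
              wb ⟨(i:ℕ)/N, hidy i⟩ s * xb ⟨(i:ℕ)%N, Nat.mod_lt _ hNpos⟩ s else 0 := by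
        intro β s
        have e2 : (⟨((finProdFinEquiv (β, s) : Fin (B*m)) : ℕ)%m,
            Nat.mod_lt _ hmpos⟩ : Fin m) = s := Fin.ext (enc_mod β s)
        rw [hwenc]
        simp only [hx, enc_div hmpos β s]
        rw [e2]
        by_cases h : (β : ℕ) = (i:ℕ)/N
        · have hβ : β = (⟨(i:ℕ)/N, hidy i⟩ : Fin B) := Fin.ext h
          rw [if_pos h, if_pos hβ, hβ]
        · rw [if_neg h, mul_zero, if_neg (fun hc => h (by rw [hc]))]
      simp_rw [hterm]
      have hpull : ∀ β : Fin B, (∑ s : Fin m, if β = (⟨(i:ℕ)/N, hidy i⟩ : Fin B) then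
            wb ⟨(i:ℕ)/N, hidy i⟩ s * xb ⟨(i:ℕ)%N, Nat.mod_lt _ hNpos⟩ s else 0)
          = if β = (⟨(i:ℕ)/N, hidy i⟩ : Fin B) then
            (∑ s : Fin m, wb ⟨(i:ℕ)/N, hidy i⟩ s * xb ⟨(i:ℕ)%N, Nat.mod_lt _ hNpos⟩ s) else 0 := by
        intro β
        by_cases h : β = (⟨(i:ℕ)/N, hidy i⟩ : Fin B) <;> simp [h]
      simp_rw [hpull]
      rw [Finset.sum_ite_eq' Finset.univ ((⟨(i:ℕ)/N, hidy i⟩ : Fin B))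
        (fun _ => ∑ s : Fin m, wb ⟨(i:ℕ)/N, hidy i⟩ s * xb ⟨(i:ℕ)%N, Nat.mod_lt _ hNpos⟩ s),
        if_pos (Finset.mem_univ _)]
      rw [hwb2 (⟨(i:ℕ)/N, hidy i⟩ : Fin B) (⟨(i:ℕ)%N, Nat.mod_lt _ hNpos⟩ : Fin N)]
      have : yb ⟨(i:ℕ)/N, hidy i⟩ ⟨(i:ℕ)%N, Nat.mod_lt _ hNpos⟩ = y i := by
        simp only [hyb]
        congr 1
        exact Fin.ext (Nat.mod_add_div (i : ℕ) N)
      rw [this]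

/-- For `z` a power of two dividing `k > 0` and `d = 2kz + k/z`, there are `zk` binary
instances in `{0,1}^d` such that every sign pattern `y ∈ {±1}^{zk}` is realized with margin
exactly `1/2` around the threshold `z/2` by some nonnegative weight vector of
ℓ₁-norm at most `k`. -/
theorem stmt4 (z j k : ℕ) (hz : z = 2 ^ j) (hdvd : z ∣ k) (hk : 0 < k) :
    ∃ x : Fin (z * k) → Fin (2 * k * z + k / z) → ℝ,
      (∀ i l, x i l = 0 ∨ x i l = 1) ∧
      ∀ y : Fin (z * k) → ℝ, (∀ i, y i = 1 ∨ y i = -1) →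
        ∃ w : Fin (2 * k * z + k / z) → ℝ, (∀ l, 0 ≤ w l) ∧ (∑ l, |w l|) ≤ k ∧
          ∀ i, y i * ((∑ l, w l * x i l) - z / 2) = 1 / 2 := by
  subst hz
  obtain ⟨B, rfl⟩ := hdvd
  have h2j : 0 < 2^j := Nat.pow_pos (by norm_num)
  have hdivB : (2^j * B) / 2^j = B := Nat.mul_div_cancel_left B h2j
  obtain ⟨xb, hxb, hblock⟩ := blockLemma j
  have hNpos : 0 < 2^j * 2^j := Nat.mul_pos h2j h2j
  have hmpos : 0 < 2^j * 2^j + (2^j * 2^j + 1) := by omega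
  obtain ⟨x, hx, H⟩ := assembleLemma B (2^j * 2^j) (2^j * 2^j + (2^j * 2^j + 1))
    hNpos hmpos ((2:ℝ)^j) xb hxb hblock
  have h1 : 2^j * (2^j * B) = B * (2^j * 2^j) := by ring
  have h2 : 2 * (2^j * B) * 2^j + (2^j * B) / 2^j = B * (2^j*2^j + (2^j*2^j + 1)) := by
    rw [hdivB]; ring
  refine ⟨fun i l => x (Fin.cast h1 i) (Fin.cast h2 l), fun i l => hx _ _, ?_⟩
  intro y hy
  have hy'sign : ∀ i', (fun i' => y (Fin.cast h1.symm i')) i' = 1 ∨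
      (fun i' => y (Fin.cast h1.symm i')) i' = -1 := fun i' => hy _
  obtain ⟨w, hw0, hw1, hw2⟩ := H (fun i' => y (Fin.cast h1.symm i')) hy'sign
  refine ⟨fun l => w (Fin.cast h2 l), fun l => hw0 _, ?_, ?_⟩
  · have hsum : ∑ l : Fin (2 * (2^j * B) * 2^j + (2^j * B) / 2^j), |w (Fin.cast h2 l)|
        = ∑ l', |w l'| := Equiv.sum_comp (finCongr h2) (fun l' => |w l'|)
    rw [hsum]
    refine le_trans hw1 (le_of_eq ?_)
    push_cast
    ring
  · intro i
    have hsum : ∑ l : Fin (2 * (2^j * B) * 2^j + (2^j * B) / 2^j),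
        w (Fin.cast h2 l) * x (Fin.cast h1 i) (Fin.cast h2 l)
        = ∑ l', w l' * x (Fin.cast h1 i) l' :=
      Equiv.sum_comp (finCongr h2) (fun l' => w l' * x (Fin.cast h1 i) l')
    rw [hsum, hw2 (Fin.cast h1 i)]
    have hyy : y (Fin.cast h1.symm (Fin.cast h1 i)) = y i := by
      congr 1
    rw [hyy]
    rcases hy i with h | h <;> rw [h] <;> push_cast <;> ring
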